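/- arXiv:2105.00517 — 6 statements merged into one kernel-verified Lean document; each statement's English description precedes it below -/
import Mathlib

section
/- For any probability mass functions P_a, P_b, P_c on a finite set X of real numbers and any threshold d ≥ 0, the thresholded optimal transport costs satisfy the inequality OT_{2d}(P_a, P_b) − OT_d(P_c, P_b) ≤ OT_d(P_a, P_c). -/
open Finset

/-- A probability mass function on a finite set `X` of real numbers. -/
def IsPMF (X : Finset ℝ) (μ : ℝ → ℝ) : Prop :=
  (∀ x ∈ X, 0 ≤ μ x) ∧ ∑ x ∈ X, μ x = 1

/-- A coupling of `μ` and `ν` on `X`: a nonnegative joint mass function on `X × X`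
whose first marginal is `μ` and second marginal is `ν`. -/
def IsCoupling (X : Finset ℝ) (μ ν : ℝ → ℝ) (γ : ℝ → ℝ → ℝ) : Prop :=
  (∀ x ∈ X, ∀ y ∈ X, 0 ≤ γ x y) ∧
  (∀ x ∈ X, ∑ y ∈ X, γ x y = μ x) ∧
  (∀ y ∈ X, ∑ x ∈ X, γ x y = ν y)

/-- The mass that a plan `γ` moves a distance of more than `d`. -/
noncomputable def transportCost (X : Finset ℝ) (d : ℝ) (γ : ℝ → ℝ → ℝ) : ℝ :=
  ∑ x ∈ X, ∑ y ∈ X, if d < |x - y| then γ x y else 0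

/-- The thresholded optimal transport cost `OT_d(μ, ν)`:
the infimum over couplings of `μ` and `ν` of the mass moved more than `d`. -/
noncomputable def OT (X : Finset ℝ) (d : ℝ) (μ ν : ℝ → ℝ) : ℝ :=
  sInf (transportCost X d '' {γ | IsCoupling X μ ν γ})

lemma transportCost_nonneg (X : Finset ℝ) (d : ℝ) (γ : ℝ → ℝ → ℝ)
    (h : ∀ x ∈ X, ∀ y ∈ X, 0 ≤ γ x y) : 0 ≤ transportCost X d γ := by
  apply Finset.sum_nonneg
  intro x hx
  apply Finset.sum_nonneg
  intro y hy
  by_cases hc : d < |x - y|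
  · simpa [hc] using h x hx y hy
  · simp [hc]

lemma bddBelow_cost_set (X : Finset ℝ) (d : ℝ) (μ ν : ℝ → ℝ) :
    BddBelow (transportCost X d '' {γ | IsCoupling X μ ν γ}) := by
  refine ⟨0, ?_⟩
  rintro c ⟨γ, hγ, rfl⟩
  exact transportCost_nonneg X d γ hγ.1

lemma prod_coupling (X : Finset ℝ) (μ ν : ℝ → ℝ) (hμ : IsPMF X μ) (hν : IsPMF X ν) :
    IsCoupling X μ ν (fun x y => μ x * ν y) := by
  refine ⟨fun x hx y hy => mul_nonneg (hμ.1 x hx) (hν.1 y hy), fun x hx => ?_, fun y hy => ?_⟩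
  · rw [← Finset.mul_sum, hν.2, mul_one]
  · rw [← Finset.sum_mul, hμ.2, one_mul]

lemma OT_set_nonempty (X : Finset ℝ) (d : ℝ) (μ ν : ℝ → ℝ)
    (hμ : IsPMF X μ) (hν : IsPMF X ν) :
    (transportCost X d '' {γ | IsCoupling X μ ν γ}).Nonempty :=
  ⟨_, ⟨_, prod_coupling X μ ν hμ hν, rfl⟩⟩

/-- Gluing lemma: composition of two couplings gives the triangle-type bound. -/
lemma OT_glue (X : Finset ℝ) (Pa Pb Pc : ℝ → ℝ) (d : ℝ)
    (γ1 γ2 : ℝ → ℝ → ℝ) (h1 : IsCoupling X Pa Pc γ1) (h2 : IsCoupling X Pc Pb γ2) :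
    OT X (2 * d) Pa Pb ≤ transportCost X d γ1 + transportCost X d γ2 := by
  obtain ⟨h1n, h1m1, h1m2⟩ := h1
  obtain ⟨h2n, h2m1, h2m2⟩ := h2
  have hz1 : ∀ z ∈ X, Pc z = 0 → ∀ x ∈ X, γ1 x z = 0 := by
    intro z hz h0 x hx
    have hs : ∑ x ∈ X, γ1 x z = 0 := by rw [h1m2 z hz, h0]
    exact (Finset.sum_eq_zero_iff_of_nonneg (fun x hx => h1n x hx z hz)).mp hs x hx
  have hz2 : ∀ z ∈ X, Pc z = 0 → ∀ y ∈ X, γ2 z y = 0 := by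
    intro z hz h0 y hy
    have hs : ∑ y ∈ X, γ2 z y = 0 := by rw [h2m1 z hz, h0]
    exact (Finset.sum_eq_zero_iff_of_nonneg (fun y hy => h2n z hz y hy)).mp hs y hy
  have hPcpos : ∀ z ∈ X, Pc z ≠ 0 → 0 < Pc z := by
    intro z hz h0
    have : 0 ≤ Pc z := (h2m1 z hz) ▸ Finset.sum_nonneg (fun y hy => h2n z hz y hy)
    exact lt_of_le_of_ne this (Ne.symm h0)
  set t : ℝ → ℝ → ℝ → ℝ := fun x z y => if Pc z = 0 then 0 else γ1 x z * γ2 z y / Pc z with ht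
  have htn : ∀ x ∈ X, ∀ z ∈ X, ∀ y ∈ X, 0 ≤ t x z y := by
    intro x hx z hz y hy
    simp only [ht]
    by_cases h0 : Pc z = 0
    · simp [h0]
    · have := hPcpos z hz h0
      have := h1n x hx z hz
      have := h2n z hz y hy
      simp only [if_neg h0]
      positivity
  -- inner sums of t
  have inner1 : ∀ x ∈ X, ∀ z ∈ X, ∑ y ∈ X, t x z y = γ1 x z := by
    intro x hx z hz
    by_cases h0 : Pc z = 0
    · simp [ht, h0, hz1 z hz h0 x hx]
    · simp only [ht, if_neg h0]
      have : ∑ y ∈ X, γ1 x z * γ2 z y / Pc z = (γ1 x z / Pc z) * ∑ y ∈ X, γ2 z y := by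
        rw [Finset.mul_sum]
        exact Finset.sum_congr rfl fun y hy => by ring
      rw [this, h2m1 z hz]
      field_simp
  have inner2 : ∀ z ∈ X, ∀ y ∈ X, ∑ x ∈ X, t x z y = γ2 z y := by
    intro z hz y hy
    by_cases h0 : Pc z = 0
    · simp [ht, h0, hz2 z hz h0 y hy]
    · simp only [ht, if_neg h0]
      have : ∑ x ∈ X, γ1 x z * γ2 z y / Pc z = (γ2 z y / Pc z) * ∑ x ∈ X, γ1 x z := by
        rw [Finset.mul_sum]
        exact Finset.sum_congr rfl fun x hx => by ring
      rw [this, h1m2 z hz]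
      field_simp
  -- the glued coupling
  set γ : ℝ → ℝ → ℝ := fun x y => ∑ z ∈ X, t x z y with hγ
  have hcoup : IsCoupling X Pa Pb γ := by
    refine ⟨fun x hx y hy => Finset.sum_nonneg fun z hz => htn x hx z hz y hy,
      fun x hx => ?_, fun y hy => ?_⟩
    · rw [hγ]
      simp only
      rw [Finset.sum_comm]
      rw [← h1m1 x hx]
      exact Finset.sum_congr rfl fun z hz => inner1 x hx z hz
    · rw [hγ]
      simp only
      rw [Finset.sum_comm]
      rw [← h2m2 y hy]
      exact Finset.sum_congr rfl fun z hz => inner2 z hz y hy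
  -- cost bound
  have hcost : transportCost X (2 * d) γ ≤ transportCost X d γ1 + transportCost X d γ2 := by
    have step1 : transportCost X (2 * d) γ =
        ∑ x ∈ X, ∑ y ∈ X, ∑ z ∈ X, (if 2 * d < |x - y| then t x z y else 0) := by
      unfold transportCost
      refine Finset.sum_congr rfl fun x hx => Finset.sum_congr rfl fun y hy => ?_
      by_cases hc : 2 * d < |x - y| <;> simp [hc, hγ]
    have step2 : ∑ x ∈ X, ∑ y ∈ X, ∑ z ∈ X, (if 2 * d < |x - y| then t x z y else 0) ≤
        ∑ x ∈ X, ∑ y ∈ X, ∑ z ∈ X,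
          ((if d < |x - z| then t x z y else 0) + (if d < |z - y| then t x z y else 0)) := by
      refine Finset.sum_le_sum fun x hx => Finset.sum_le_sum fun y hy =>
        Finset.sum_le_sum fun z hz => ?_
      have htnn := htn x hx z hz y hy
      by_cases hc : 2 * d < |x - y|
      · have hor : d < |x - z| ∨ d < |z - y| := by
          by_contra h
          push_neg at h
          have : |x - y| ≤ |x - z| + |z - y| := by
            calc |x - y| = |(x - z) + (z - y)| := by ring_nf
            _ ≤ |x - z| + |z - y| := abs_add_le _ _
          linarith
        rcases hor with h' | h'
        · simp only [if_pos hc, if_pos h']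
          have : (0:ℝ) ≤ if d < |z - y| then t x z y else 0 := by
            split <;> [exact htnn; exact le_refl 0]
          linarith
        · simp only [if_pos hc, if_pos h']
          have : (0:ℝ) ≤ if d < |x - z| then t x z y else 0 := by
            split <;> [exact htnn; exact le_refl 0]
          linarith
      · simp only [if_neg hc]
        have h1 : (0:ℝ) ≤ if d < |x - z| then t x z y else 0 := by
          split <;> [exact htnn; exact le_refl 0]
        have h2 : (0:ℝ) ≤ if d < |z - y| then t x z y else 0 := by
          split <;> [exact htnn; exact le_refl 0]
        linarith
    have stepA : ∑ x ∈ X, ∑ y ∈ X, ∑ z ∈ X, (if d < |x - z| then t x z y else 0) =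
        transportCost X d γ1 := by
      unfold transportCost
      refine Finset.sum_congr rfl fun x hx => ?_
      rw [Finset.sum_comm]
      refine Finset.sum_congr rfl fun z hz => ?_
      by_cases hc : d < |x - z|
      · simp only [if_pos hc]
        exact inner1 x hx z hz
      · simp [hc]
    have stepB : ∑ x ∈ X, ∑ y ∈ X, ∑ z ∈ X, (if d < |z - y| then t x z y else 0) =
        transportCost X d γ2 := by
      unfold transportCost
      rw [Finset.sum_comm]
      calc ∑ y ∈ X, ∑ x ∈ X, ∑ z ∈ X, (if d < |z - y| then t x z y else 0)
          = ∑ y ∈ X, ∑ z ∈ X, ∑ x ∈ X, (if d < |z - y| then t x z y else 0) := by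
            exact Finset.sum_congr rfl fun y hy => Finset.sum_comm
        _ = ∑ z ∈ X, ∑ y ∈ X, ∑ x ∈ X, (if d < |z - y| then t x z y else 0) :=
            Finset.sum_comm
        _ = ∑ z ∈ X, ∑ y ∈ X, (if d < |z - y| then γ2 z y else 0) := by
            refine Finset.sum_congr rfl fun z hz => Finset.sum_congr rfl fun y hy => ?_
            by_cases hc : d < |z - y|
            · simp only [if_pos hc]
              exact inner2 z hz y hy
            · simp [hc]
    calc transportCost X (2 * d) γ
        ≤ ∑ x ∈ X, ∑ y ∈ X, ∑ z ∈ X,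
          ((if d < |x - z| then t x z y else 0) + (if d < |z - y| then t x z y else 0)) := by
          rw [step1]; exact step2
      _ = transportCost X d γ1 + transportCost X d γ2 := by
          rw [← stepA, ← stepB]
          simp [Finset.sum_add_distrib]
  calc OT X (2 * d) Pa Pb ≤ transportCost X (2 * d) γ :=
        csInf_le (bddBelow_cost_set X (2 * d) Pa Pb) ⟨γ, hcoup, rfl⟩
    _ ≤ transportCost X d γ1 + transportCost X d γ2 := hcost

/-- Theorem 1 of the paper: for pmfs `P_a, P_b, P_c` on a finite set
`X ⊆ ℝ` and any threshold `d ≥ 0`,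
`OT_{2d}(P_a, P_b) − OT_d(P_c, P_b) ≤ OT_d(P_a, P_c)`. -/
theorem ot_difference_triangle_inequality
    (X : Finset ℝ) (Pa Pb Pc : ℝ → ℝ)
    (hPa : IsPMF X Pa) (hPb : IsPMF X Pb) (hPc : IsPMF X Pc)
    (d : ℝ) (hd : 0 ≤ d) :
    OT X (2 * d) Pa Pb - OT X d Pc Pb ≤ OT X d Pa Pc := by
  have key : ∀ c1 ∈ transportCost X d '' {γ | IsCoupling X Pa Pc γ},
      ∀ c2 ∈ transportCost X d '' {γ | IsCoupling X Pc Pb γ},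
      OT X (2 * d) Pa Pb ≤ c1 + c2 := by
    rintro c1 ⟨γ1, hγ1, rfl⟩ c2 ⟨γ2, hγ2, rfl⟩
    exact OT_glue X Pa Pb Pc d γ1 γ2 hγ1 hγ2
  have step1 : ∀ c1 ∈ transportCost X d '' {γ | IsCoupling X Pa Pc γ},
      OT X (2 * d) Pa Pb - OT X d Pc Pb ≤ c1 := by
    intro c1 hc1
    have : OT X (2 * d) Pa Pb - c1 ≤ OT X d Pc Pb := by
      apply le_csInf (OT_set_nonempty X d Pc Pb hPc hPb)
      intro c2 hc2
      linarith [key c1 hc1 c2 hc2]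
    linarith
  have : OT X (2 * d) Pa Pb - OT X d Pc Pb ≤ OT X d Pa Pc :=
    le_csInf (OT_set_nonempty X d Pa Pc hPa hPc) step1
  exact this
end

section
/- For any probability mass functions P_a, P_b, P_c on a finite set X of real numbers and any thresholds d₁ ≥ 0 and d₂ ≥ 0, the thresholded optimal transport costs satisfy the generalized triangle inequality OT_{d₁+d₂}(P_a, P_b) ≤ OT_{d₁}(P_a, P_c) + OT_{d₂}(P_c, P_b). -/
open Finset

/-- columns over a zero mass point vanish -/
lemma col_zero {X : Finset ℝ} {μ ν : ℝ → ℝ} {γ : ℝ → ℝ → ℝ}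
    (h : IsCoupling X μ ν γ) {z : ℝ} (hz : z ∈ X) (h0 : ν z = 0) :
    ∀ x ∈ X, γ x z = 0 := by
  have hsum : ∑ x ∈ X, γ x z = 0 := (h.2.2 z hz).trans h0
  intro x hx
  exact (Finset.sum_eq_zero_iff_of_nonneg (fun x hx => h.1 x hx z hz)).mp hsum x hx

lemma row_zero {X : Finset ℝ} {μ ν : ℝ → ℝ} {γ : ℝ → ℝ → ℝ}
    (h : IsCoupling X μ ν γ) {z : ℝ} (hz : z ∈ X) (h0 : μ z = 0) :
    ∀ y ∈ X, γ z y = 0 := by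
  have hsum : ∑ y ∈ X, γ z y = 0 := (h.2.1 z hz).trans h0
  intro y hy
  exact (Finset.sum_eq_zero_iff_of_nonneg (fun y hy => h.1 z hz y hy)).mp hsum y hy

lemma product_coupling {X : Finset ℝ} {μ ν : ℝ → ℝ} (hμ : IsPMF X μ) (hν : IsPMF X ν) :
    IsCoupling X μ ν (fun x y => μ x * ν y) := by
  refine ⟨fun x hx y hy => mul_nonneg (hμ.1 x hx) (hν.1 y hy), ?_, ?_⟩
  · intro x hx; rw [← Finset.mul_sum, hν.2, mul_one]
  · intro y hy; rw [← Finset.sum_mul, hμ.2, one_mul]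

lemma cost_nonneg {X : Finset ℝ} (d : ℝ) {γ : ℝ → ℝ → ℝ}
    (h : ∀ x ∈ X, ∀ y ∈ X, 0 ≤ γ x y) : 0 ≤ transportCost X d γ := by
  apply Finset.sum_nonneg; intro x hx
  apply Finset.sum_nonneg; intro y hy
  split
  · exact h x hx y hy
  · exact le_rfl


/-- generalized triangle (gluing) inequality for the thresholded
optimal transport cost:
`OT_{d₁+d₂}(P_a, P_b) ≤ OT_{d₁}(P_a, P_c) + OT_{d₂}(P_c, P_b)`. -/
theorem ot_generalized_triangle_inequality
    (X : Finset ℝ) (Pa Pb Pc : ℝ → ℝ)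
    (hPa : IsPMF X Pa) (hPb : IsPMF X Pb) (hPc : IsPMF X Pc)
    (d₁ d₂ : ℝ) (hd₁ : 0 ≤ d₁) (hd₂ : 0 ≤ d₂) :
    OT X (d₁ + d₂) Pa Pb ≤ OT X d₁ Pa Pc + OT X d₂ Pc Pb := by
  -- sets of achievable costs
  set S₁ := transportCost X d₁ '' {γ | IsCoupling X Pa Pc γ} with hS₁
  set S₂ := transportCost X d₂ '' {γ | IsCoupling X Pc Pb γ} with hS₂
  have hne₁ : S₁.Nonempty := ⟨_, ⟨_, product_coupling hPa hPc, rfl⟩⟩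
  have hne₂ : S₂.Nonempty := ⟨_, ⟨_, product_coupling hPc hPb, rfl⟩⟩
  have hbd : BddBelow (transportCost X (d₁+d₂) '' {γ | IsCoupling X Pa Pb γ}) := by
    refine ⟨0, ?_⟩
    rintro _ ⟨γ, hγ, rfl⟩
    exact cost_nonneg _ hγ.1
  -- key: for any couplings γ₁, γ₂, OT ≤ cost₁ + cost₂
  have key : ∀ a ∈ S₁, ∀ b ∈ S₂, OT X (d₁ + d₂) Pa Pb ≤ a + b := by
    rintro _ ⟨γ₁, hγ₁, rfl⟩ _ ⟨γ₂, hγ₂, rfl⟩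
    set γ : ℝ → ℝ → ℝ := fun x y => ∑ z ∈ X, if Pc z = 0 then 0 else γ₁ x z * γ₂ z y / Pc z
      with hγdef
    have hposc : ∀ z ∈ X, Pc z ≠ 0 → 0 < Pc z := by
      intro z hz h0
      exact lt_of_le_of_ne (hPc.1 z hz) (Ne.symm h0)
    have hterm_nonneg : ∀ x ∈ X, ∀ y ∈ X, ∀ z ∈ X,
        0 ≤ (if Pc z = 0 then 0 else γ₁ x z * γ₂ z y / Pc z) := by
      intro x hx y hy z hz
      split
      · exact le_refl 0
      · next h0 =>
        exact div_nonneg (mul_nonneg (hγ₁.1 x hx z hz) (hγ₂.1 z hz y hy)) (hposc z hz h0).le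
    have hcoup : IsCoupling X Pa Pb γ := by
      refine ⟨fun x hx y hy => Finset.sum_nonneg (fun z hz => hterm_nonneg x hx y hy z hz), ?_, ?_⟩
      · intro x hx
        rw [hγdef]
        simp only
        rw [Finset.sum_comm]
        calc ∑ z ∈ X, ∑ y ∈ X, (if Pc z = 0 then 0 else γ₁ x z * γ₂ z y / Pc z)
            = ∑ z ∈ X, γ₁ x z := by
              apply Finset.sum_congr rfl
              intro z hz
              by_cases h0 : Pc z = 0
              · simp only [h0, if_true]
                rw [Finset.sum_const, smul_zero]
                exact (col_zero hγ₁ hz h0 x hx).symm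
              · simp only [h0, if_false]
                rw [← Finset.sum_div, ← Finset.mul_sum, hγ₂.2.1 z hz,
                  mul_div_assoc, div_self h0, mul_one]
          _ = Pa x := hγ₁.2.1 x hx
      · intro y hy
        rw [hγdef]
        simp only
        rw [Finset.sum_comm]
        calc ∑ z ∈ X, ∑ x ∈ X, (if Pc z = 0 then 0 else γ₁ x z * γ₂ z y / Pc z)
            = ∑ z ∈ X, γ₂ z y := by
              apply Finset.sum_congr rfl
              intro z hz
              by_cases h0 : Pc z = 0
              · simp only [h0, if_true]
                rw [Finset.sum_const, smul_zero]
                exact (row_zero hγ₂ hz h0 y hy).symm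
              · simp only [h0, if_false]
                have : ∀ x ∈ X, γ₁ x z * γ₂ z y / Pc z = γ₁ x z * (γ₂ z y / Pc z) := by
                  intro x hx; ring
                rw [Finset.sum_congr rfl this, ← Finset.sum_mul, hγ₁.2.2 z hz]
                field_simp
          _ = Pb y := hγ₂.2.2 y hy
    have hcost : transportCost X (d₁ + d₂) γ ≤
        transportCost X d₁ γ₁ + transportCost X d₂ γ₂ := by
      have step : transportCost X (d₁ + d₂) γ ≤
          (∑ x ∈ X, ∑ z ∈ X, ∑ y ∈ X,
            (if d₁ < |x - z| then (if Pc z = 0 then 0 else γ₁ x z * γ₂ z y / Pc z) else 0)) +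
          (∑ x ∈ X, ∑ z ∈ X, ∑ y ∈ X,
            (if d₂ < |z - y| then (if Pc z = 0 then 0 else γ₁ x z * γ₂ z y / Pc z) else 0)) := by
        rw [transportCost, ← Finset.sum_add_distrib]
        apply Finset.sum_le_sum
        intro x hx
        rw [← Finset.sum_add_distrib]
        -- LHS inner: ∑ y, if d < |x-y| then ∑ z t else 0
        -- transform: push if inside sum over z, then swap y,z
        have lhs_eq : (∑ y ∈ X, if d₁ + d₂ < |x - y| then γ x y else 0)
            = ∑ z ∈ X, ∑ y ∈ X, (if d₁ + d₂ < |x - y| then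
                (if Pc z = 0 then 0 else γ₁ x z * γ₂ z y / Pc z) else 0) := by
          rw [Finset.sum_comm]
          apply Finset.sum_congr rfl
          intro y hy
          by_cases h : d₁ + d₂ < |x - y|
          · simp only [h, if_true, hγdef]
          · simp only [h, if_false, Finset.sum_const, smul_zero]
        rw [lhs_eq]
        apply Finset.sum_le_sum
        intro z hz
        rw [← Finset.sum_add_distrib]
        apply Finset.sum_le_sum
        intro y hy
        by_cases h : d₁ + d₂ < |x - y|
        · simp only [h, if_true]
          have htri : |x - y| ≤ |x - z| + |z - y| := abs_sub_le x z y
          have hcase : d₁ < |x - z| ∨ d₂ < |z - y| := by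
            by_contra hc
            push_neg at hc
            have := add_le_add hc.1 hc.2
            linarith
          have ht := hterm_nonneg x hx y hy z hz
          rcases hcase with h1 | h2
          · simp only [h1, if_true]
            have : (0:ℝ) ≤ (if d₂ < |z - y| then (if Pc z = 0 then 0 else γ₁ x z * γ₂ z y / Pc z) else 0) := by
              split
              · exact ht
              · exact le_refl 0
            linarith
          · simp only [h2, if_true]
            have : (0:ℝ) ≤ (if d₁ < |x - z| then (if Pc z = 0 then 0 else γ₁ x z * γ₂ z y / Pc z) else 0) := by
              split
              · exact ht
              · exact le_refl 0
            linarith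
        · simp only [h, if_false]
          have h1 : (0:ℝ) ≤ (if d₁ < |x - z| then (if Pc z = 0 then 0 else γ₁ x z * γ₂ z y / Pc z) else 0) := by
            split
            · exact hterm_nonneg x hx y hy z hz
            · exact le_refl 0
          have h2 : (0:ℝ) ≤ (if d₂ < |z - y| then (if Pc z = 0 then 0 else γ₁ x z * γ₂ z y / Pc z) else 0) := by
            split
            · exact hterm_nonneg x hx y hy z hz
            · exact le_refl 0
          linarith
      have eq1 : (∑ x ∈ X, ∑ z ∈ X, ∑ y ∈ X,
            (if d₁ < |x - z| then (if Pc z = 0 then 0 else γ₁ x z * γ₂ z y / Pc z) else 0))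
          = transportCost X d₁ γ₁ := by
        rw [transportCost]
        apply Finset.sum_congr rfl
        intro x hx
        apply Finset.sum_congr rfl
        intro z hz
        by_cases h : d₁ < |x - z|
        · simp only [h, if_true]
          by_cases h0 : Pc z = 0
          · simp only [h0, if_true, Finset.sum_const, smul_zero]
            exact (col_zero hγ₁ hz h0 x hx).symm
          · simp only [h0, if_false]
            rw [← Finset.sum_div, ← Finset.mul_sum, hγ₂.2.1 z hz,
              mul_div_assoc, div_self h0, mul_one]
        · simp only [h, if_false, Finset.sum_const, smul_zero]
      have eq2 : (∑ x ∈ X, ∑ z ∈ X, ∑ y ∈ X,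
            (if d₂ < |z - y| then (if Pc z = 0 then 0 else γ₁ x z * γ₂ z y / Pc z) else 0))
          = transportCost X d₂ γ₂ := by
        rw [transportCost, Finset.sum_comm]
        apply Finset.sum_congr rfl
        intro z hz
        rw [Finset.sum_comm]
        apply Finset.sum_congr rfl
        intro y hy
        by_cases h : d₂ < |z - y|
        · simp only [h, if_true]
          by_cases h0 : Pc z = 0
          · simp only [h0, if_true, Finset.sum_const, smul_zero]
            exact (row_zero hγ₂ hz h0 y hy).symm
          · simp only [h0, if_false]
            have : ∀ x ∈ X, γ₁ x z * γ₂ z y / Pc z = γ₁ x z * (γ₂ z y / Pc z) := by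
              intro x hx; ring
            rw [Finset.sum_congr rfl this, ← Finset.sum_mul, hγ₁.2.2 z hz]
            field_simp
        · simp only [h, if_false, Finset.sum_const, smul_zero]
      rw [eq1, eq2] at step
      exact step
    calc OT X (d₁ + d₂) Pa Pb ≤ transportCost X (d₁ + d₂) γ :=
          csInf_le hbd ⟨γ, hcoup, rfl⟩
      _ ≤ _ := hcost
  -- now take infima
  have h1 : ∀ b ∈ S₂, OT X (d₁ + d₂) Pa Pb - b ≤ sInf S₁ := by
    intro b hb
    apply le_csInf hne₁
    intro a ha
    linarith [key a ha b hb]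
  have h2 : OT X (d₁ + d₂) Pa Pb - sInf S₁ ≤ sInf S₂ := by
    apply le_csInf hne₂
    intro b hb
    linarith [h1 b hb]
  have e1 : OT X d₁ Pa Pc = sInf S₁ := rfl
  have e2 : OT X d₂ Pc Pb = sInf S₂ := rfl
  rw [e1, e2]
  linarith
end

section
/- In the market equilibrium model, if F is nondecreasing and the market clears at volume of trade s·q at some (p, t) with t ≥ 0 and s > 0, then s ≤ (N − q)/N. That is, the equilibrium share of the quota that can be traded on the black market never exceeds (N − q)/N. -/
/-- The market clears at volume of trade `s * q` at price `p` and per-side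
transaction cost `t`: demand `(N - q) * (1 - F (p + t))` and supply
`q * F (p - t)` both equal `s * q`. -/
def Clears (N q : ℝ) (F : ℝ → ℝ) (s p t : ℝ) : Prop :=
  (N - q) * (1 - F (p + t)) = s * q ∧ q * F (p - t) = s * q

/-- if `F` is nondecreasing and the market clears at volume `s * q`
at some `(p, t)` with `t ≥ 0` and `s > 0`, then `s ≤ (N − q)/N`: the equilibrium
share of the quota traded on the black market never exceeds `(N − q)/N`. -/
theorem equilibrium_share_upper_bound
    (N q : ℝ) (hq : 0 < q) (hqN : q < N)
    (F : ℝ → ℝ) (hF01 : ∀ v, 0 ≤ F v ∧ F v ≤ 1)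
    (hFmono : Monotone F)
    (s p t : ℝ) (ht : 0 ≤ t) (hs0 : 0 < s)
    (h : Clears N q F s p t) :
    s ≤ (N - q) / N := by
  obtain ⟨hd, hsup⟩ := h
  have hFs : F (p - t) = s := by
    have := mul_right_cancel₀ (ne_of_gt hq) (by linarith [hsup] : F (p - t) * q = s * q)
    exact this
  have hmono : F (p - t) ≤ F (p + t) := hFmono (by linarith)
  have h1 : s * q ≤ (N - q) * (1 - s) := by
    have := (hF01 (p + t)).2
    nlinarith [hd]
  have hN : 0 < N := lt_trans hq hqN
  rw [le_div_iff₀ hN]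
  nlinarith
end

section
/- In the market equilibrium model, the implied transaction cost is strictly decreasing in the volume of trade: if F is nondecreasing, the market clears at volume s·q at (p, t) and at volume s′·q at (p′, t′), and 0 < s < s′, then t > t′. In particular, the transaction cost implied by a lower-bound estimate of the share of trade is an upper bound for the transaction cost implied by the true share. -/
/-- the implied transaction cost is strictly decreasing in the
volume of trade: if `F` is nondecreasing, the market clears at volume `s * q`
at `(p, t)` and at volume `s' * q` at `(p', t')`, and `0 < s < s'`, then
`t > t'`. -/
theorem transaction_cost_strictly_decreasing_in_share
    (N q : ℝ) (hq : 0 < q) (hqN : q < N)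
    (F : ℝ → ℝ) (hF01 : ∀ v, 0 ≤ F v ∧ F v ≤ 1)
    (hFmono : Monotone F)
    (s s' p t p' t' : ℝ) (hs0 : 0 < s) (hss' : s < s')
    (h : Clears N q F s p t) (h' : Clears N q F s' p' t') :
    t > t' := by
  obtain ⟨hd, hsup⟩ := h
  obtain ⟨hd', hsup'⟩ := h'
  have hNq : 0 < N - q := by linarith
  have hq0 : q ≠ 0 := ne_of_gt hq
  have h1 : F (p - t) = s := by
    have := hsup.trans (mul_comm s q)
    exact mul_left_cancel₀ hq0 this
  have h1' : F (p' - t') = s' := by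
    have := hsup'.trans (mul_comm s' q)
    exact mul_left_cancel₀ hq0 this
  have hA : F (p - t) < F (p' - t') := by rw [h1, h1']; exact hss'
  have hlt1 : p - t < p' - t' := by
    by_contra hle
    push_neg at hle
    exact absurd (hFmono hle) (not_le.mpr hA)
  have hB : F (p' + t') < F (p + t) := by nlinarith
  have hlt2 : p' + t' < p + t := by
    by_contra hle
    push_neg at hle
    exact absurd (hFmono hle) (not_le.mpr hB)
  linarith
end

section
/- In the market equilibrium model, the buyer's all-in price is strictly decreasing and the seller's net price is strictly increasing in the volume of trade: if F is nondecreasing, the market clears at volume s·q at (p, t) and at volume s′·q at (p′, t′), and 0 < s < s′, then p + t > p′ + t′ and p − t < p′ − t′. In particular, the buyer price p̃_buyer = p + t computed at a lower-bound share is an upper bound, and the seller price p̃_seller = p − t computed at a lower-bound share is a lower bound. -/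
/-- the buyer's all-in price `p + t` is strictly decreasing and
the seller's net price `p − t` is strictly increasing in the volume of trade:
if `F` is nondecreasing, the market clears at volume `s * q` at `(p, t)` and at
volume `s' * q` at `(p', t')`, and `0 < s < s'`, then `p + t > p' + t'` and
`p − t < p' − t'`. -/
theorem buyer_price_decreasing_seller_price_increasing
    (N q : ℝ) (hq : 0 < q) (hqN : q < N)
    (F : ℝ → ℝ) (hF01 : ∀ v, 0 ≤ F v ∧ F v ≤ 1)
    (hFmono : Monotone F)
    (s s' p t p' t' : ℝ) (hs0 : 0 < s) (hss' : s < s')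
    (h : Clears N q F s p t) (h' : Clears N q F s' p' t') :
    p + t > p' + t' ∧ p - t < p' - t' := by
  obtain ⟨hd, hs⟩ := h
  obtain ⟨hd', hs'⟩ := h'
  have hNq : (0:ℝ) < N - q := by linarith
  -- supply equations: F(p - t) = s, F(p' - t') = s'
  have hFpt : F (p - t) = s := by
    have := mul_left_cancel₀ hq.ne' (by linarith [hs] : q * F (p - t) = q * s)
    exact this
  have hFpt' : F (p' - t') = s' := by
    have := mul_left_cancel₀ hq.ne' (by linarith [hs'] : q * F (p' - t') = q * s')
    exact this
  -- demand equations
  have hFb : F (p + t) = 1 - s * q / (N - q) := by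
    field_simp at hd ⊢; linarith
  have hFb' : F (p' + t') = 1 - s' * q / (N - q) := by
    field_simp at hd' ⊢; linarith
  constructor
  · by_contra hle
    push_neg at hle
    have := hFmono hle
    rw [hFb, hFb'] at this
    have : s' * q / (N - q) ≤ s * q / (N - q) := by linarith
    have := (div_le_div_iff_of_pos_right hNq).mp this
    nlinarith
  · by_contra hle
    push_neg at hle
    have := hFmono hle
    rw [hFpt, hFpt'] at this
    linarith
end

section
/- In the market equilibrium model with heterogeneous transaction costs, the buyer and seller prices are identified even though the decomposition into price and side-specific costs is not: suppose F is strictly increasing, and triples (p, t_b, t_s) and (p′, t_b′, t_s′) both satisfy (N − q)·(1 − F(p + t_b)) = s·q and q·F(p − t_s) = s·q (and likewise for the primed triple) for the same share s ∈ (0,1). Then p + t_b = p′ + t_b′ and p − t_s = p′ − t_s′. Moreover, writing p̃_buyer = p + t_b and p̃_seller = p − t_s, for every price p″ with p̃_seller ≤ p″ ≤ p̃_buyer, the triple (p″, p̃_buyer − p″, p″ − p̃_seller) also satisfies both market-clearing equations with nonnegative side-specific costs, so the individual components p, t_b, t_s are not identified. -/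
/-- Market clearing with heterogeneous transaction costs: the buyer bears cost
`tb` and the seller bears cost `ts` per trade at transaction price `p`; demand
`(N − q) * (1 − F (p + tb))` and supply `q * F (p − ts)` both equal `s * q`. -/
def ClearsH (N q : ℝ) (F : ℝ → ℝ) (s p tb ts : ℝ) : Prop :=
  (N - q) * (1 - F (p + tb)) = s * q ∧ q * F (p - ts) = s * q

/-- with heterogeneous transaction costs, the buyer and seller
prices `p̃_buyer = p + t_b` and `p̃_seller = p − t_s` are identified even though
the decomposition into price and side-specific costs is not: any two clearing
triples agree on `p + t_b` and `p − t_s`, and for every price `p''` between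
`p̃_seller` and `p̃_buyer`, the triple `(p'', p̃_buyer − p'', p'' − p̃_seller)`
also clears the market with nonnegative side-specific costs. -/
theorem heterogeneous_costs_buyer_seller_prices_identified
    (N q : ℝ) (hq : 0 < q) (hqN : q < N)
    (F : ℝ → ℝ) (hF01 : ∀ v, 0 ≤ F v ∧ F v ≤ 1)
    (hFmono : StrictMono F)
    (s : ℝ) (hs0 : 0 < s) (hs1 : s < 1)
    (p tb ts p' tb' ts' : ℝ)
    (h : ClearsH N q F s p tb ts) (h' : ClearsH N q F s p' tb' ts') :
    p + tb = p' + tb' ∧ p - ts = p' - ts' ∧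
    ∀ p'' : ℝ, p - ts ≤ p'' → p'' ≤ p + tb →
      0 ≤ (p + tb) - p'' ∧ 0 ≤ p'' - (p - ts) ∧
      ClearsH N q F s p'' ((p + tb) - p'') (p'' - (p - ts)) := by
  obtain ⟨hd, hsup⟩ := h
  obtain ⟨hd', hsup'⟩ := h'
  have hNq : N - q ≠ 0 := by linarith
  have hFb : F (p + tb) = F (p' + tb') := by
    have h1 : (N - q) * (1 - F (p + tb)) = (N - q) * (1 - F (p' + tb')) := by
      rw [hd, hd']
    have := mul_left_cancel₀ hNq h1
    linarith
  have hFs : F (p - ts) = F (p' - ts') := by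
    have h1 : q * F (p - ts) = q * F (p' - ts') := by rw [hsup, hsup']
    exact mul_left_cancel₀ hq.ne' h1
  refine ⟨hFmono.injective hFb, hFmono.injective hFs, ?_⟩
  intro p'' h1 h2
  refine ⟨by linarith, by linarith, ?_, ?_⟩
  · have : p'' + ((p + tb) - p'') = p + tb := by ring
    rw [this]; exact hd
  · have : p'' - (p'' - (p - ts)) = p - ts := by ring
    rw [this]; exact hsup
end
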